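/- arXiv:2305.03149 — 6 statements merged into one kernel-verified Lean document; each statement's English description precedes it below -/
import Mathlib

section
/- Let R0 = Π Θᵀ where Π is an N×K matrix with nonnegative entries and rows summing to 1, and Θ is a J×K matrix. Suppose Π contains the K×K identity matrix as a submatrix (after row permutation), i.e., there exist indices S = (S_1,...,S_K) with Π_{S,:} = I_K. If R0 = U Σ Vᵀ is a rank-K singular value decomposition with UᵀU = VᵀV = I_K and Σ invertible, then U = Π U_{S,:}. -/
open Matrix BigOperators

private lemma submatrix_mul_id {N K M L : ℕ} (A : Matrix (Fin N) (Fin M) ℝ)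
    (B : Matrix (Fin M) (Fin L) ℝ) (S : Fin K → Fin N) :
    (A * B).submatrix S id = A.submatrix S id * B := by
  ext i j
  simp [Matrix.mul_apply, Matrix.submatrix_apply]

/-- If `R0 = Pmat * Tmatᵀ` with `Pmat` row-stochastic nonnegative containing the
identity as a row submatrix (`Pmat.submatrix S id = 1`), and `R0 = U * Sig * Vᵀ` is a rank-K SVD
with orthonormal columns and invertible diagonal `Sig`, then `U = Pmat * U.submatrix S id`. -/
theorem stmt0 {N J K : ℕ}
    (Pmat : Matrix (Fin N) (Fin K) ℝ) (Tmat : Matrix (Fin J) (Fin K) ℝ)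
    (U : Matrix (Fin N) (Fin K) ℝ) (V : Matrix (Fin J) (Fin K) ℝ)
    (Sig : Matrix (Fin K) (Fin K) ℝ)
    (hnn : ∀ i k, 0 ≤ Pmat i k) (hrow : ∀ i, ∑ k, Pmat i k = 1)
    (S : Fin K → Fin N) (hS : Pmat.submatrix S id = 1)
    (hUo : Uᵀ * U = 1) (hVo : Vᵀ * V = 1)
    (hSigDiag : Sig.IsDiag) (hSigInv : IsUnit Sig.det)
    (hSVD : Pmat * Tmatᵀ = U * Sig * Vᵀ) :
    U = Pmat * U.submatrix S id := by
  have hU : U = Pmat * Tmatᵀ * V * Sig⁻¹ := by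
    rw [hSVD, Matrix.mul_assoc (U * Sig) Vᵀ V, hVo, Matrix.mul_one,
      Matrix.mul_assoc U Sig Sig⁻¹, Matrix.mul_nonsing_inv _ hSigInv, Matrix.mul_one]
  have hUS : U.submatrix S id = Tmatᵀ * V * Sig⁻¹ := by
    rw [hU, submatrix_mul_id, submatrix_mul_id, submatrix_mul_id, hS, Matrix.one_mul]
  rw [hUS, hU, Matrix.mul_assoc, Matrix.mul_assoc, Matrix.mul_assoc]
end

section
/- With M_ε defined as above, if ε ≤ 1/(K−1) and Π is row-stochastic with nonnegative entries satisfying π_{i1} ≤ 1 − δ for all i, and 0 < ε < δ, then every entry of Π M_ε is nonnegative. Moreover, for k ≥ 2, (Π M_ε)_{ik} ≥ ε δ² > 0. -/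
open Matrix BigOperators

/-- The `K×K` matrix `M_ε` from the proof of Theorem 1. -/
noncomputable def Meps (K : ℕ) (ε : ℝ) : Matrix (Fin K) (Fin K) ℝ :=
  Matrix.of fun i j =>
    if (i : ℕ) = 0 then
      (if (j : ℕ) = 0 then 1 + ((K : ℝ) - 1) * ε ^ 2 else -ε ^ 2)
    else
      if (j : ℕ) = 0 then 0
      else if i = j then ε + (1 - ((K : ℝ) - 1) * ε) else ε

private lemma fin_coe_zero_iff {K : ℕ} (hK : 0 < K) (j : Fin K) :
    (j : ℕ) = 0 ↔ j = ⟨0, hK⟩ := by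
  constructor <;> intro h
  · exact Fin.ext h
  · simp [h]

/-- If `ε ≤ 1/(K−1)`, `0 < ε < δ`, and `Pmat` is row-stochastic nonnegative with
`Pmat i 0 ≤ 1 − δ` for all `i`, then all entries of `Pmat * M_ε` are nonnegative; moreover
for columns `k ≥ 2` the entries are at least `ε δ² > 0`. -/
theorem stmt7 {N K : ℕ} (hK : 2 ≤ K)
    (Pmat : Matrix (Fin N) (Fin K) ℝ)
    (hPnn : ∀ i k, 0 ≤ Pmat i k) (hProw : ∀ i, ∑ k, Pmat i k = 1)
    (δ ε : ℝ) (hε : 0 < ε) (hεδ : ε < δ)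
    (hεK : ε ≤ 1 / ((K : ℝ) - 1))
    (hnopure : ∀ i, Pmat i ⟨0, by omega⟩ ≤ 1 - δ) :
    (∀ i k, 0 ≤ (Pmat * Meps K ε) i k) ∧
      (∀ i (k : Fin K), 1 ≤ (k : ℕ) → ε * δ ^ 2 ≤ (Pmat * Meps K ε) i k) ∧
      0 < ε * δ ^ 2 := by
  have hKpos : 0 < K := by omega
  set z : Fin K := ⟨0, hKpos⟩ with hzdef
  have hδ : 0 < δ := lt_trans hε hεδ
  have hpos : 0 < ε * δ ^ 2 := by positivity
  have hK1 : (1 : ℝ) ≤ (K : ℝ) - 1 := by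
    have h2 : (2 : ℝ) ≤ (K : ℝ) := by exact_mod_cast hK
    linarith
  have hc : 0 ≤ 1 - ((K : ℝ) - 1) * ε := by
    rw [le_div_iff₀ (by linarith : (0:ℝ) < (K : ℝ) - 1)] at hεK
    nlinarith
  -- key: lower bound for columns k ≥ 1
  have key : ∀ i (k : Fin K), 1 ≤ (k : ℕ) → ε * δ ^ 2 ≤ (Pmat * Meps K ε) i k := by
    intro i k hk
    have hkz : k ≠ z := by
      intro h; rw [h] at hk; simp [hzdef] at hk
    have hkc : (k : ℕ) ≠ 0 := by omega
    have hsum : (Pmat * Meps K ε) i k =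
        (ε * (∑ j ∈ Finset.univ.erase z, Pmat i j)
          + Pmat i k * (1 - ((K : ℝ) - 1) * ε)) + Pmat i z * (-ε ^ 2) := by
      rw [Matrix.mul_apply, ← Finset.sum_erase_add _ _ (Finset.mem_univ z)]
      congr 1
      · rw [Finset.mul_sum]
        rw [show Pmat i k * (1 - ((K : ℝ) - 1) * ε)
            = ∑ j ∈ Finset.univ.erase z, if j = k then Pmat i j * (1 - ((K : ℝ) - 1) * ε) else 0 by
          rw [Finset.sum_ite_eq' (Finset.univ.erase z) k]
          simp [hkz]]
        rw [← Finset.sum_add_distrib]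
        apply Finset.sum_congr rfl
        intro j hj
        have hjz : j ≠ z := Finset.ne_of_mem_erase hj
        have hjc : (j : ℕ) ≠ 0 := fun h => hjz ((fin_coe_zero_iff hKpos j).mp h)
        simp only [Meps, Matrix.of_apply, if_neg hjc, if_neg hkc]
        by_cases h : j = k
        · simp [h]; ring
        · simp [h]; ring
      · simp only [Meps, Matrix.of_apply, hzdef]
        simp [hkc]
    have herase : ∑ j ∈ Finset.univ.erase z, Pmat i j = 1 - Pmat i z := by
      have := Finset.sum_erase_add Finset.univ (Pmat i) (Finset.mem_univ z)
      rw [hProw i] at this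
      linarith
    rw [hsum, herase]
    have hA : 0 ≤ (δ - ε) * Pmat i z := mul_nonneg (by linarith) (hPnn i z)
    have hB : 0 ≤ ε * (1 - δ - Pmat i z) := mul_nonneg hε.le (by linarith [hnopure i])
    have hC : 0 ≤ δ * (1 - δ - Pmat i z) := mul_nonneg hδ.le (by linarith [hnopure i])
    have hD : 0 ≤ Pmat i k * (1 - ((K : ℝ) - 1) * ε) := mul_nonneg (hPnn i k) hc
    nlinarith [hPnn i z]
  refine ⟨?_, key, hpos⟩
  intro i k
  by_cases hk : (k : ℕ) = 0
  · have hkz : k = z := (fin_coe_zero_iff hKpos k).mp hk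
    subst hkz
    rw [Matrix.mul_apply]
    apply Finset.sum_nonneg
    intro j _
    simp only [Meps, Matrix.of_apply, hzdef]
    by_cases hj : (j : ℕ) = 0
    · simp only [hj, if_true, if_pos rfl]
      have : (0:ℝ) ≤ 1 + ((K : ℝ) - 1) * ε ^ 2 := by nlinarith [sq_nonneg ε]
      exact mul_nonneg (hPnn i j) this
    · simp [hj]
  · exact le_trans hpos.le (key i k (by omega))
end

section
/- (Identifiability under full rank) Suppose Π, Π̃ ∈ ℝ^{N×K} are row-stochastic with nonnegative entries, each containing I_K as a submatrix of rows (pure subject condition), and Θ, Θ̃ ∈ [0,1]^{J×K} with rank(Θ) = K. If Π Θᵀ = Π̃ Θ̃ᵀ, then there is a K×K permutation matrix P with Π̃ = Π P and Θ̃ = Θ P. -/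
open Matrix BigOperators

/-- Uniqueness of coefficients when the columns of a full-column-rank matrix are combined. -/
lemma stmt9_uniq {J K : ℕ} (Tmat : Matrix (Fin J) (Fin K) ℝ) (hrkT : Tmat.rank = K)
    (c d : Fin K → ℝ) (h : ∀ j, ∑ k, c k * Tmat j k = ∑ k, d k * Tmat j k) : c = d := by
  have hker : LinearMap.ker Tmat.mulVecLin = ⊥ := by
    have h1 := LinearMap.finrank_range_add_finrank_ker Tmat.mulVecLin
    rw [show Module.finrank ℝ (LinearMap.range Tmat.mulVecLin) = Tmat.rank from rfl, hrkT,
      Module.finrank_fintype_fun_eq_card] at h1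
    simp at h1
    exact h1
  have hinj := LinearMap.ker_eq_bot.mp hker
  have : Tmat.mulVecLin c = Tmat.mulVecLin d := by
    funext j
    simp only [Matrix.mulVecLin_apply, Matrix.mulVec, dotProduct]
    rw [Finset.sum_congr rfl (fun k _ => mul_comm (Tmat j k) (c k)),
      Finset.sum_congr rfl (fun k _ => mul_comm (Tmat j k) (d k))]
    exact h j
  exact hinj this

/-- Theorem 2(a): identifiability under full rank.
If `Pmat, P'` are row-stochastic nonnegative matrices each satisfying the pure subject condition,
`Tmat, T'` have entries in `[0,1]` with `rank Tmat = K`, and `Pmat * Tmatᵀ = P' * T'ᵀ`, then the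
two parameter pairs agree up to a common permutation of the `K` columns. -/
theorem stmt9 {N J K : ℕ}
    (Pmat P' : Matrix (Fin N) (Fin K) ℝ) (Tmat T' : Matrix (Fin J) (Fin K) ℝ)
    (hPnn : ∀ i k, 0 ≤ Pmat i k) (hProw : ∀ i, ∑ k, Pmat i k = 1)
    (hP'nn : ∀ i k, 0 ≤ P' i k) (hP'row : ∀ i, ∑ k, P' i k = 1)
    (hPpure : ∀ k : Fin K, ∃ i, ∀ l, Pmat i l = if l = k then 1 else 0)
    (hP'pure : ∀ k : Fin K, ∃ i, ∀ l, P' i l = if l = k then 1 else 0)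
    (hT : ∀ j k, Tmat j k ∈ Set.Icc (0 : ℝ) 1)
    (hT' : ∀ j k, T' j k ∈ Set.Icc (0 : ℝ) 1)
    (hrkT : Tmat.rank = K)
    (heq : Pmat * Tmatᵀ = P' * T'ᵀ) :
    ∃ σ : Equiv.Perm (Fin K),
      P' = Pmat.submatrix id σ ∧ T' = Tmat.submatrix id σ := by
  -- entrywise form of heq
  have hE : ∀ i j, ∑ l, Pmat i l * Tmat j l = ∑ l, P' i l * T' j l := by
    intro i j
    have := congrFun (congrFun heq i) j
    simpa [Matrix.mul_apply, Matrix.transpose_apply] using this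
  choose ip hip using hPpure
  choose ip' hip' using hP'pure
  set A : Matrix (Fin K) (Fin K) ℝ := fun k l => Pmat (ip' k) l with hA
  set B : Matrix (Fin K) (Fin K) ℝ := fun k l => P' (ip k) l with hB
  -- T' columns as combinations of Tmat columns
  have hTA : ∀ j k, T' j k = ∑ l, A k l * Tmat j l := by
    intro j k
    have := (hE (ip' k) j).symm
    rw [Finset.sum_congr rfl (fun l _ => by rw [hip' k l])] at this
    simpa using this
  -- Tmat columns as combinations of T' columns
  have hTB : ∀ j k, Tmat j k = ∑ l, B k l * T' j l := by
    intro j k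
    have := hE (ip k) j
    rw [Finset.sum_congr rfl (fun l _ => by rw [hip k l])] at this
    simpa using this
  -- B * A = 1 (entrywise)
  have hBA : ∀ k m, ∑ l, B k l * A l m = if m = k then 1 else 0 := by
    intro k m
    have huniq := stmt9_uniq Tmat hrkT (fun m => ∑ l, B k l * A l m)
      (fun m => if m = k then 1 else 0) ?_
    · exact congrFun huniq m
    · intro j
      have : Tmat j k = ∑ m, (∑ l, B k l * A l m) * Tmat j m := by
        rw [hTB j k]
        simp_rw [hTA j, Finset.mul_sum, Finset.sum_mul]
        rw [Finset.sum_comm]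
        congr 1; funext m; congr 1; funext l; ring
      rw [← this]
      simp
  -- for each k find a row of A equal to e_k
  have hrow : ∀ k, ∃ l, ∀ m, A l m = if m = k then 1 else 0 := by
    intro k
    have hBpos : ∃ l, 0 < B k l := by
      by_contra hcon
      push_neg at hcon
      have : ∑ l, B k l = 0 := Finset.sum_eq_zero (fun l _ => le_antisymm (hcon l) (hP'nn _ _))
      rw [hB] at this
      simp only at this
      rw [hP'row (ip k)] at this
      norm_num at this
    obtain ⟨l, hl⟩ := hBpos
    refine ⟨l, fun m => ?_⟩
    have hAzero : ∀ m, m ≠ k → A l m = 0 := by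
      intro m hm
      have h0 : ∑ l', B k l' * A l' m = 0 := by rw [hBA]; simp [hm]
      have hterm : B k l * A l m = 0 := by
        have hnn : ∀ l' ∈ Finset.univ, 0 ≤ B k l' * A l' m :=
          fun l' _ => mul_nonneg (hP'nn _ _) (hPnn _ _)
        exact (Finset.sum_eq_zero_iff_of_nonneg hnn).mp h0 l (Finset.mem_univ l)
      rcases mul_eq_zero.mp hterm with h | h
      · exact absurd h (ne_of_gt hl)
      · exact h
    by_cases hmk : m = k
    · subst hmk
      have hsum : ∑ m', A l m' = 1 := hProw (ip' l)
      rw [Finset.sum_eq_single m (fun b _ hb => hAzero b hb) (by simp)] at hsum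
      simp [hsum]
    · simp [hmk, hAzero m hmk]
  choose f hf using hrow
  have hfinj : Function.Injective f := by
    intro k k' hkk'
    by_contra hne
    have h1 : A (f k) k = 1 := by rw [hf k k]; simp
    have h2 : A (f k') k = 0 := by rw [hf k' k]; simp [hne]
    rw [hkk'] at h1
    rw [h1] at h2
    norm_num at h2
  let e : Equiv.Perm (Fin K) := Equiv.ofBijective f (Finite.injective_iff_bijective.mp hfinj)
  have hfe : ∀ k, f k = e k := fun k => rfl
  refine ⟨e.symm, ?_, ?_⟩
  · -- P' = Pmat.submatrix id e.symm
    funext i k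
    have hcoef : (fun m => Pmat i m) = (fun m => P' i (e m)) := by
      apply stmt9_uniq Tmat hrkT
      intro j
      have h1 := hE i j
      have h2 : ∑ l, P' i l * T' j l = ∑ m, P' i (e m) * Tmat j m := by
        rw [← Equiv.sum_comp e (fun l => P' i l * T' j l)]
        congr 1; funext m
        rw [hTA j (e m)]
        have : ∀ l', A (e m) l' = if l' = m then 1 else 0 := by
          intro l'; rw [← hfe m]; exact hf m l'
        simp_rw [this]
        simp
      rw [h1, h2]
    have := congrFun hcoef (e.symm k)
    simp at this
    simp [Matrix.submatrix_apply, ← this]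
  · -- T' = Tmat.submatrix id e.symm
    funext j k
    rw [Matrix.submatrix_apply, id, hTA j k]
    have hAk : ∀ l, A k l = if l = e.symm k then 1 else 0 := by
      intro l
      have := hf (e.symm k) l
      rw [hfe (e.symm k), Equiv.apply_symm_apply] at this
      exact this
    simp_rw [hAk]
    simp
end

section
/- (Key permutation lemma) Let U ∈ ℝ^{N×r} and suppose there are two index lists S and S̃ of length K and row-stochastic nonnegative matrices A, B ∈ ℝ^{K×K} such that U_{S̃,:} = A U_{S,:} and U_{S,:} = B U_{S̃,:}, where the K rows of U_{S,:} are affinely independent (no row is a convex combination of the others). Then A and B are permutation matrices and U_{S̃,:} = P U_{S,:} for a permutation matrix P. -/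
open Matrix BigOperators

/-- Key permutation lemma. Suppose `U_{S̃,:} = A U_{S,:}` and
`U_{S,:} = B U_{S̃,:}` for row-stochastic nonnegative `A, B`, and no row of `U_{S,:}` is a
convex combination of the other rows. Then `A` and `B` are permutation matrices and
`U_{S̃,:} = P U_{S,:}` for a permutation matrix `P`, i.e. the rows of `U_{S̃,:}` are a
permutation of the rows of `U_{S,:}`. -/
theorem stmt10 {N r K : ℕ}
    (U : Matrix (Fin N) (Fin r) ℝ)
    (S S' : Fin K → Fin N)
    (A B : Matrix (Fin K) (Fin K) ℝ)
    (hAnn : ∀ i k, 0 ≤ A i k) (hArow : ∀ i, ∑ k, A i k = 1)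
    (hBnn : ∀ i k, 0 ≤ B i k) (hBrow : ∀ i, ∑ k, B i k = 1)
    (h1 : U.submatrix S' id = A * U.submatrix S id)
    (h2 : U.submatrix S id = B * U.submatrix S' id)
    (hext : ∀ k : Fin K,
      U (S k) ∉ convexHull ℝ (Set.range fun k' : {k' : Fin K // k' ≠ k} => U (S k'.1))) :
    ∃ σ : Equiv.Perm (Fin K),
      A = Matrix.of (fun i j => if j = σ i then (1 : ℝ) else 0) ∧
      B = Matrix.of (fun i j => if j = σ.symm i then (1 : ℝ) else 0) ∧
      (∀ k, U (S' k) = U (S (σ k))) := by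
  set C := B * A with hC
  have hCU : C * U.submatrix S id = U.submatrix S id := by
    rw [hC, Matrix.mul_assoc, ← h1, ← h2]
  have hCnn : ∀ i k, 0 ≤ C i k := by
    intro i k
    rw [hC, Matrix.mul_apply]
    exact Finset.sum_nonneg fun j _ => mul_nonneg (hBnn i j) (hAnn j k)
  have hCrow : ∀ i, ∑ k, C i k = 1 := by
    intro i
    calc ∑ k, C i k = ∑ k, ∑ j, B i j * A j k := by
          simp [hC, Matrix.mul_apply]
    _ = ∑ j, ∑ k, B i j * A j k := Finset.sum_comm
    _ = ∑ j, B i j * ∑ k, A j k := by simp [Finset.mul_sum]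
    _ = ∑ j, B i j := by simp [hArow]
    _ = 1 := hBrow i
  -- row equation
  have hrow : ∀ i, ∑ k, C i k • U (S k) = U (S i) := by
    intro i
    funext j
    have := congrFun (congrFun hCU i) j
    rw [Matrix.mul_apply] at this
    simpa using this
  -- C is the identity
  have hCdiag : ∀ i, C i i = 1 := by
    intro i
    by_contra hne
    have hle : C i i ≤ 1 := by
      calc C i i ≤ ∑ k, C i k :=
            Finset.single_le_sum (fun k _ => hCnn i k) (Finset.mem_univ i)
      _ = 1 := hCrow i
    have hlt : C i i < 1 := lt_of_le_of_ne hle hne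
    set t := 1 - C i i with ht
    have htpos : 0 < t := by linarith
    have hsum' : ∑ k ∈ Finset.univ.erase i, C i k = t := by
      have h := hCrow i
      rw [← Finset.add_sum_erase _ _ (Finset.mem_univ i)] at h
      linarith
    have hmemiff : ∀ x : Fin K, x ∈ Finset.univ.erase i ↔ x ≠ i := by
      intro x; simp [Finset.mem_erase]
    have hsub : ∑ k' : {k' : Fin K // k' ≠ i}, C i k'.1 = t := by
      rw [← Finset.sum_subtype (Finset.univ.erase i) hmemiff (fun k => C i k)]
      exact hsum'
    have hsubv : ∑ k' : {k' : Fin K // k' ≠ i}, C i k'.1 • U (S k'.1)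
        = t • U (S i) := by
      rw [← Finset.sum_subtype (Finset.univ.erase i) hmemiff
        (fun k => C i k • U (S k))]
      have h := hrow i
      rw [← Finset.add_sum_erase _ _ (Finset.mem_univ i)] at h
      have : ∑ k ∈ Finset.univ.erase i, C i k • U (S k)
          = U (S i) - C i i • U (S i) := by
        exact eq_sub_of_add_eq' h
      rw [this, ht, sub_smul, one_smul]
    have hmem : U (S i) ∈ convexHull ℝ
        (Set.range fun k' : {k' : Fin K // k' ≠ i} => U (S k'.1)) := by
      have := Finset.centerMass_mem_convexHull (Finset.univ : Finset {k' : Fin K // k' ≠ i})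
        (w := fun k' => C i k'.1) (fun k' _ => hCnn i k'.1)
        (by rw [hsub]; exact htpos)
        (z := fun k' => U (S k'.1)) (fun k' _ => Set.mem_range_self k')
      rwa [Finset.centerMass, hsub, hsubv, smul_smul, inv_mul_cancel₀ htpos.ne',
        one_smul] at this
    exact hext i hmem
  have hBA : B * A = 1 := by
    ext i k
    rcases eq_or_ne k i with rfl | hk
    · rw [← hC, hCdiag, Matrix.one_apply_eq]
    · have h := hCrow i
      rw [← Finset.add_sum_erase _ _ (Finset.mem_univ i), hCdiag] at h
      have hz : ∑ k ∈ Finset.univ.erase i, C i k = 0 := by linarith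
      have := (Finset.sum_eq_zero_iff_of_nonneg (fun k _ => hCnn i k)).mp hz k
        (by simp [Finset.mem_erase, hk])
      rw [← hC, this, Matrix.one_apply_ne (by exact fun h => hk h.symm)]
  have hAB : A * B = 1 := mul_eq_one_comm.mp hBA
  -- extract σ
  have key : ∀ k, ∃ l, (∀ j, A k j = if j = l then 1 else 0) ∧
      (∀ m, B l m = if m = k then 1 else 0) := by
    intro k
    have hpos : ∃ l, 0 < A k l := by
      by_contra h
      push_neg at h
      have : ∑ l, A k l = 0 :=
        Finset.sum_eq_zero fun l _ => le_antisymm (h l) (hAnn k l)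
      rw [hArow] at this; norm_num at this
    obtain ⟨l, hl⟩ := hpos
    have hB0 : ∀ m, m ≠ k → B l m = 0 := by
      intro m hm
      have hABkm : (A * B) k m = 0 := by
        rw [hAB, Matrix.one_apply_ne (fun h => hm h.symm)]
      rw [Matrix.mul_apply] at hABkm
      have := (Finset.sum_eq_zero_iff_of_nonneg
        (fun j _ => mul_nonneg (hAnn k j) (hBnn j m))).mp hABkm l (Finset.mem_univ l)
      exact (mul_eq_zero.mp this).resolve_left hl.ne'
    have hBlk : B l k = 1 := by
      have h := hBrow l
      rw [Finset.sum_eq_single k (fun m _ hm => hB0 m hm) (by simp)] at h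
      exact h
    have hBl : ∀ m, B l m = if m = k then 1 else 0 := by
      intro m
      rcases eq_or_ne m k with rfl | hm
      · simp [hBlk]
      · simp [hB0 m hm, hm]
    refine ⟨l, fun j => ?_, hBl⟩
    have h := congrFun (congrFun hBA l) j
    rw [Matrix.mul_apply, Finset.sum_congr rfl
      (fun m _ => by rw [hBl m])] at h
    simp only [ite_mul, one_mul, zero_mul, Finset.sum_ite_eq', Finset.mem_univ,
      if_true] at h
    rcases eq_or_ne j l with rfl | hj
    · simp [h, Matrix.one_apply]
    · rw [h, Matrix.one_apply_ne (fun e => hj e.symm), if_neg hj]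
  choose f hf1 hf2 using key
  have hinj : Function.Injective f := by
    intro k k' hkk
    have h1' := hf2 k k'
    have h2' := hf2 k' k'
    rw [hkk] at h1'
    rw [h2', if_pos rfl] at h1'
    by_contra hne
    rw [if_neg (fun e => hne e.symm)] at h1'
    norm_num at h1'
  have hbij : Function.Bijective f := Finite.injective_iff_bijective.mp hinj
  refine ⟨Equiv.ofBijective f hbij, ?_, ?_, ?_⟩
  · ext i j
    rw [Matrix.of_apply, hf1]
    rfl
  · ext i m
    have hi : i = f ((Equiv.ofBijective f hbij).symm i) :=
      ((Equiv.ofBijective f hbij).apply_symm_apply i).symm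
    rw [Matrix.of_apply]
    conv_lhs => rw [hi]
    exact hf2 _ m
  · intro k
    funext j
    have h := congrFun (congrFun h1 k) j
    rw [Matrix.mul_apply, Finset.sum_congr rfl (fun l _ => by rw [hf1 k l])] at h
    simpa using h
end

section
/- (Non-identifiability with a completely mixed subject) Let U_{1:K,:} = [I_r; W₁ᵀ] U_{1:r,:} for some W₁ ∈ ℝ^{r×(K−r)} with r < K, and suppose there exists a nonzero β ∈ ℝ^{K−r} with βᵀ(1_{K−r} − W₁ᵀ 1_r) = 0. If Π is row-stochastic with a row π_m having all entries strictly positive, then for sufficiently small ε > 0 the matrix Π̃ obtained from Π by replacing row m with π_mᵀ + ε βᵀ[−W₁ᵀ, I_{K−r}] is row-stochastic with entries in (0,1) in that row, satisfies Π̃ ≠ Π, and Π̃ U_{1:K,:} = Π U_{1:K,:}. -/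
open Matrix BigOperators

/-- non-identifiability with a completely mixed subject.
Columns of `Pmat` are indexed by `Fin r ⊕ Fin s` (`K = r + s`, `s = K − r ≥ 1`).
Suppose the bottom block of `U` satisfies `U_{r+j,:} = (W₁ᵀ U_{1:r,:})_{j,:}`, i.e.
`U (inr j) = ∑ i, W i j • U (inl i)`, and `β ≠ 0` satisfies `βᵀ(1_{K−r} − W₁ᵀ1_r) = 0`.
If row `m` of the row-stochastic matrix `Pmat` has all entries strictly positive,
then for all small enough `ε > 0` the matrix obtained by replacing row `m` of `Pmat` with
`π_m + ε βᵀ[−W₁ᵀ, I_{K−r}]` is row-stochastic with entries of row `m` in `(0,1)`,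
differs from `Pmat`, and yields the same product with `U`. -/
theorem stmt12 {N r s r' : ℕ} (hs : 0 < s)
    (Pmat : Matrix (Fin N) (Fin r ⊕ Fin s) ℝ)
    (hPnn : ∀ i k, 0 ≤ Pmat i k) (hProw : ∀ i, ∑ k, Pmat i k = 1)
    (U : Matrix (Fin r ⊕ Fin s) (Fin r') ℝ)
    (W : Matrix (Fin r) (Fin s) ℝ)
    (hU : ∀ (j : Fin s) (c : Fin r'), U (Sum.inr j) c = ∑ i, W i j * U (Sum.inl i) c)
    (β : Fin s → ℝ) (hβ : β ≠ 0)
    (hβW : ∑ j, β j * (1 - ∑ i, W i j) = 0)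
    (m : Fin N) (hm : ∀ k, 0 < Pmat m k) :
    ∃ ε₀ > (0 : ℝ), ∀ ε : ℝ, 0 < ε → ε < ε₀ →
      let d : Fin r ⊕ Fin s → ℝ := Sum.elim (fun i => -(∑ j, β j * W i j)) β
      let P' : Matrix (Fin N) (Fin r ⊕ Fin s) ℝ :=
        Pmat.updateRow m (fun k => Pmat m k + ε * d k)
      (∀ k, P' m k ∈ Set.Ioo (0 : ℝ) 1) ∧
      (∀ i, ∑ k, P' i k = 1) ∧
      P' ≠ Pmat ∧
      P' * U = Pmat * U := by
  classical
  have hne : Nonempty (Fin r ⊕ Fin s) := ⟨Sum.inr ⟨0, hs⟩⟩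
  obtain ⟨j0, hj0⟩ : ∃ j, β j ≠ 0 := by
    by_contra h; push_neg at h; exact hβ (funext h)
  set D : Fin r ⊕ Fin s → ℝ := Sum.elim (fun i => -(∑ j, β j * W i j)) β with hD
  have hswap : ∑ j, β j * ∑ i, W i j = ∑ i, ∑ j, β j * W i j := by
    simp_rw [Finset.mul_sum]; exact Finset.sum_comm
  have hβW' : ∑ i, ∑ j, β j * W i j = ∑ j, β j := by
    have h2 : ∑ j, β j * (1 - ∑ i, W i j)
        = ∑ j, β j - ∑ j, β j * ∑ i, W i j := by
      rw [← Finset.sum_sub_distrib]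
      exact Finset.sum_congr rfl (fun j _ => by ring)
    rw [← hswap]; rw [h2] at hβW; linarith
  have hDsum : ∑ k, D k = 0 := by
    rw [Fintype.sum_sum_type]
    simp only [hD, Sum.elim_inl, Sum.elim_inr]
    rw [Finset.sum_neg_distrib, hβW']
    ring
  have hDU : ∀ c, ∑ k, D k * U k c = 0 := by
    intro c
    rw [Fintype.sum_sum_type]
    simp only [hD, Sum.elim_inl, Sum.elim_inr, hU]
    have h3 : ∑ j, β j * ∑ i, W i j * U (Sum.inl i) c
        = ∑ i, ∑ j, β j * (W i j * U (Sum.inl i) c) := by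
      simp_rw [Finset.mul_sum]; exact Finset.sum_comm
    rw [h3, ← Finset.sum_add_distrib]
    apply Finset.sum_eq_zero
    intro i _
    rw [neg_mul, Finset.sum_mul]
    simp [mul_assoc]
  -- every entry of row m is < 1
  have hlt1 : ∀ k, Pmat m k < 1 := by
    intro k
    by_cases hcard : ∃ k' : Fin r ⊕ Fin s, k' ≠ k
    · obtain ⟨k', hk'⟩ := hcard
      have hsum : Pmat m k + Pmat m k' ≤ ∑ k'', Pmat m k'' := by
        rw [← Finset.sum_pair hk'.symm]
        exact Finset.sum_le_sum_of_subset_of_nonneg (Finset.subset_univ _)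
          (fun x _ _ => hPnn m x)
      rw [hProw m] at hsum
      have := hm k'
      linarith
    · push_neg at hcard
      exfalso
      have hr0 : IsEmpty (Fin r) := ⟨fun i => by
        have h1 := hcard (Sum.inl i)
        have h2 := hcard (Sum.inr j0)
        rw [← h2] at h1
        exact Sum.inl_ne_inr h1⟩
      have hall : ∀ j : Fin s, j = j0 := fun j =>
        Sum.inr_injective ((hcard (Sum.inr j)).trans (hcard (Sum.inr j0)).symm)
      have huniv : (Finset.univ : Finset (Fin s)) = {j0} := by
        ext j; simp [hall j]
      have hWz : ∀ j : Fin s, ∑ i, W i j = 0 := fun j => by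
        rw [Finset.sum_eq_zero]; intro i; exact (hr0.false i).elim
      rw [huniv] at hβW
      simp [hWz] at hβW
      exact hj0 hβW
  -- bounds
  have hune : (Finset.univ : Finset (Fin r ⊕ Fin s)).Nonempty := Finset.univ_nonempty
  set δ : ℝ := Finset.univ.inf' hune (fun k => min (Pmat m k) (1 - Pmat m k)) with hδ
  have hδpos : 0 < δ := by
    rw [hδ, Finset.lt_inf'_iff]
    intro k _
    exact lt_min (hm k) (by linarith [hlt1 k])
  have hδle : ∀ k, δ ≤ min (Pmat m k) (1 - Pmat m k) := fun k =>
    Finset.inf'_le _ (Finset.mem_univ k)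
  set M : ℝ := Finset.univ.sup' hune (fun k => |D k|) with hM
  have hMle : ∀ k, |D k| ≤ M := by
    intro k; rw [hM]; exact Finset.le_sup' (fun k => |D k|) (Finset.mem_univ k)
  have hM0 : 0 ≤ M := le_trans (abs_nonneg _) (hMle (Sum.inr j0))
  refine ⟨δ / (M + 1), by positivity, ?_⟩
  intro ε hε hεlt
  have hbound : ∀ k, |ε * D k| < δ := by
    intro k
    rw [abs_mul, abs_of_pos hε]
    calc ε * |D k| ≤ ε * M := mul_le_mul_of_nonneg_left (hMle k) hε.le
      _ ≤ ε * (M + 1) := by nlinarith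
      _ < δ / (M + 1) * (M + 1) := by
          apply mul_lt_mul_of_pos_right hεlt; linarith
      _ = δ := by field_simp
  refine ⟨?_, ?_, ?_, ?_⟩
  · intro k
    rw [Matrix.updateRow_self]
    have h := abs_lt.mp (hbound k)
    have h1 := min_le_left (Pmat m k) (1 - Pmat m k)
    have h2 := min_le_right (Pmat m k) (1 - Pmat m k)
    have h3 := hδle k
    exact ⟨by linarith, by linarith⟩
  · intro i
    by_cases hi : i = m
    · subst hi
      simp only [Matrix.updateRow_self]
      rw [Finset.sum_add_distrib, ← Finset.mul_sum, hDsum, hProw]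
      ring
    · simp only [Matrix.updateRow_ne hi, hProw]
  · intro hcontra
    have h := congrFun (congrFun hcontra m) (Sum.inr j0)
    rw [Matrix.updateRow_self] at h
    have hd : D (Sum.inr j0) = β j0 := by simp [hD]
    have : ε * β j0 = 0 := by rw [← hd]; linarith
    rcases mul_eq_zero.mp this with h' | h'
    · exact absurd h' (ne_of_gt hε)
    · exact hj0 h'
  · ext i c
    by_cases hi : i = m
    · subst hi
      simp only [Matrix.mul_apply, Matrix.updateRow_self]
      have : ∀ k, (Pmat i k + ε * D k) * U k c
          = Pmat i k * U k c + ε * (D k * U k c) := fun k => by ring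
      simp_rw [this]
      rw [Finset.sum_add_distrib, ← Finset.mul_sum, hDU, mul_zero, add_zero]
    · simp only [Matrix.mul_apply, Matrix.updateRow_ne hi]
end

section
/- Let U = Π U_{S,:} with UᵀU = I_K, Π_{S,:} = I_K, and rank(Π) = K. Then the maximum row norm of U satisfies ‖U‖_{2,∞} ≤ ‖U_{S,:}‖ = 1/σ_K(Π), where σ_K(Π) is the smallest singular value of Π. -/
open Matrix BigOperators

/-- The `k`-th largest singular value of a real matrix, via the Courant–Fischer
max–min characterization. -/
noncomputable def singVal {m n : ℕ} (A : Matrix (Fin m) (Fin n) ℝ) (k : ℕ) : ℝ :=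
  ⨆ V : {V : Submodule ℝ (EuclideanSpace ℝ (Fin n)) // Module.finrank ℝ V = k},
    ⨅ x : {x : EuclideanSpace ℝ (Fin n) // x ∈ V.1 ∧ ‖x‖ = 1},
      ‖Matrix.toEuclideanLin A x.1‖



noncomputable def cl {m n : ℕ} (A : Matrix (Fin m) (Fin n) ℝ) :
    EuclideanSpace ℝ (Fin n) →L[ℝ] EuclideanSpace ℝ (Fin m) :=
  LinearMap.toContinuousLinearMap (Matrix.toEuclideanLin A)

lemma cl_apply {m n : ℕ} (A : Matrix (Fin m) (Fin n) ℝ) (x : EuclideanSpace ℝ (Fin n)) :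
    cl A x = Matrix.toEuclideanLin A x := rfl

lemma cl_apply' {m n : ℕ} (A : Matrix (Fin m) (Fin n) ℝ) (x : EuclideanSpace ℝ (Fin n)) (i : Fin m) :
    cl A x i = A.mulVec x i := rfl

lemma cl_mul {m n p : ℕ} (A : Matrix (Fin m) (Fin n) ℝ) (B : Matrix (Fin n) (Fin p) ℝ)
    (x : EuclideanSpace ℝ (Fin p)) : cl (A * B) x = cl A (cl B x) := by
  ext i
  have : (cl B x : Fin n → ℝ) = B.mulVec x := rfl
  simp [cl_apply', this, ← mulVec_mulVec]

lemma norm_sq_cl {m n : ℕ} (A : Matrix (Fin m) (Fin n) ℝ) (x : EuclideanSpace ℝ (Fin n)) :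
    ‖cl A x‖ ^ 2 = (A.mulVec x) ⬝ᵥ (A.mulVec x) := by
  rw [← real_inner_self_eq_norm_sq]
  rw [EuclideanSpace.inner_eq_star_dotProduct, star_trivial]
  rfl

lemma norm_cl_eq {m n : ℕ} (U : Matrix (Fin m) (Fin n) ℝ) (hUo : Uᵀ * U = 1)
    (y : EuclideanSpace ℝ (Fin n)) : ‖cl U y‖ = ‖y‖ := by
  have h2 : ‖cl U y‖ ^ 2 = ‖y‖ ^ 2 := by
    rw [norm_sq_cl]
    have : (U *ᵥ y) ⬝ᵥ (U *ᵥ y) = ((U *ᵥ ⇑y) ᵥ* U) ⬝ᵥ y := (dotProduct_mulVec _ _ _)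
    rw [this, ← vecMul_transpose, vecMul_vecMul, ← transpose_transpose U, ← transpose_mul]
    rw [transpose_transpose, hUo]
    rw [transpose_one, vecMul_one, ← real_inner_self_eq_norm_sq,
      EuclideanSpace.inner_eq_star_dotProduct, star_trivial]
  exact (pow_left_inj₀ (norm_nonneg _) (norm_nonneg _) two_ne_zero).mp h2

lemma unit_nonempty {n : ℕ} (V : Submodule ℝ (EuclideanSpace ℝ (Fin n)))
    (hV : 0 < Module.finrank ℝ V) :
    Nonempty {x : EuclideanSpace ℝ (Fin n) // x ∈ V ∧ ‖x‖ = 1} := by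
  have hbot : V ≠ ⊥ := by intro h; rw [h] at hV; simp at hV
  obtain ⟨v, hv, hvne⟩ := (Submodule.ne_bot_iff V).mp hbot
  refine ⟨⟨‖v‖⁻¹ • v, V.smul_mem _ hv, ?_⟩⟩
  rw [norm_smul, norm_inv, norm_norm, inv_mul_cancel₀ (norm_ne_zero_iff.mpr hvne)]

lemma inf_le_opnorm {m n : ℕ} (A : Matrix (Fin m) (Fin n) ℝ)
    (V : {V : Submodule ℝ (EuclideanSpace ℝ (Fin n)) // Module.finrank ℝ V = 1}) :
    (⨅ x : {x : EuclideanSpace ℝ (Fin n) // x ∈ V.1 ∧ ‖x‖ = 1},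
      ‖Matrix.toEuclideanLin A x.1‖) ≤ ‖cl A‖ := by
  have : Nonempty {x : EuclideanSpace ℝ (Fin n) // x ∈ V.1 ∧ ‖x‖ = 1} :=
    unit_nonempty V.1 (by rw [V.2]; norm_num)
  obtain ⟨x⟩ := this
  refine ciInf_le_of_le ⟨0, by rintro _ ⟨y, rfl⟩; positivity⟩ x ?_
  calc ‖Matrix.toEuclideanLin A x.1‖ = ‖cl A x.1‖ := rfl
    _ ≤ ‖cl A‖ * ‖x.1‖ := (cl A).le_opNorm _
    _ = ‖cl A‖ := by rw [x.2.2, mul_one]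

lemma sv_one {m n : ℕ} (hn : 0 < n) (A : Matrix (Fin m) (Fin n) ℝ) :
    singVal A 1 = ‖cl A‖ := by
  have hne : Nonempty {V : Submodule ℝ (EuclideanSpace ℝ (Fin n)) // Module.finrank ℝ V = 1} := by
    refine ⟨⟨Submodule.span ℝ {EuclideanSpace.single (⟨0, hn⟩ : Fin n) (1:ℝ)}, ?_⟩⟩
    rw [finrank_span_singleton]
    intro h
    have := congrArg (fun v : EuclideanSpace ℝ (Fin n) => v ⟨0, hn⟩) h
    simp at this
  have hbdd : BddAbove (Set.range fun V : {V : Submodule ℝ (EuclideanSpace ℝ (Fin n)) //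
      Module.finrank ℝ V = 1} => ⨅ x : {x : EuclideanSpace ℝ (Fin n) // x ∈ V.1 ∧ ‖x‖ = 1},
      ‖Matrix.toEuclideanLin A x.1‖) := ⟨‖cl A‖, by rintro _ ⟨V, rfl⟩; exact inf_le_opnorm A V⟩
  apply le_antisymm
  · exact ciSup_le (inf_le_opnorm A)
  · -- opNorm ≤ singVal
    have hsv0 : 0 ≤ singVal A 1 := by
      obtain ⟨V⟩ := hne
      refine le_trans ?_ (le_ciSup hbdd V)
      have : Nonempty {x : EuclideanSpace ℝ (Fin n) // x ∈ V.1 ∧ ‖x‖ = 1} :=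
        unit_nonempty V.1 (by rw [V.2]; norm_num)
      exact le_ciInf fun x => norm_nonneg _
    refine ContinuousLinearMap.opNorm_le_bound _ hsv0 fun x => ?_
    rcases eq_or_ne x 0 with rfl | hx
    · simp
    · obtain ⟨u, hu⟩ : ∃ u : EuclideanSpace ℝ (Fin n), u = ‖x‖⁻¹ • x := ⟨_, rfl⟩
      have hxn : ‖x‖ ≠ 0 := norm_ne_zero_iff.mpr hx
      have hu1 : ‖u‖ = 1 := by
        rw [hu, norm_smul, norm_inv, norm_norm, inv_mul_cancel₀ hxn]
      have hune : u ≠ 0 := by intro h; rw [h] at hu1; simp at hu1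
      set V : {V : Submodule ℝ (EuclideanSpace ℝ (Fin n)) // Module.finrank ℝ V = 1} :=
        ⟨Submodule.span ℝ {u}, finrank_span_singleton hune⟩ with hV
      have hAu : ‖cl A u‖ ≤ singVal A 1 := by
        refine le_trans ?_ (le_ciSup hbdd V)
        have : Nonempty {x : EuclideanSpace ℝ (Fin n) // x ∈ V.1 ∧ ‖x‖ = 1} :=
          unit_nonempty V.1 (by rw [V.2]; norm_num)
        refine le_ciInf ?_
        rintro ⟨y, hy, hy1⟩
        obtain ⟨c, rfl⟩ := Submodule.mem_span_singleton.mp hy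
        have : ‖c • u‖ = |c| := by rw [norm_smul, hu1, mul_one]; rfl
        have hc : |c| = 1 := by rw [← this, hy1]
        show ‖cl A u‖ ≤ ‖cl A (c • u)‖
        rw [_root_.map_smul, norm_smul, Real.norm_eq_abs, hc, one_mul]
      have : cl A x = ‖x‖ • cl A u := by
        rw [hu, _root_.map_smul, smul_smul, mul_inv_cancel₀ hxn, one_smul]
      rw [this, norm_smul, Real.norm_eq_abs, abs_of_nonneg (norm_nonneg x), mul_comm]
      exact mul_le_mul_of_nonneg_right hAu (norm_nonneg x)

lemma sv_full {m n : ℕ} (A : Matrix (Fin m) (Fin n) ℝ) :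
    singVal A n = ⨅ x : {x : EuclideanSpace ℝ (Fin n) //
      x ∈ (⊤ : Submodule ℝ (EuclideanSpace ℝ (Fin n))) ∧ ‖x‖ = 1}, ‖cl A x.1‖ := by
  have htop : Module.finrank ℝ (⊤ : Submodule ℝ (EuclideanSpace ℝ (Fin n))) = n := by
    rw [finrank_top]; exact finrank_euclideanSpace_fin
  have key : ∀ V : {V : Submodule ℝ (EuclideanSpace ℝ (Fin n)) // Module.finrank ℝ V = n},
      V = ⟨⊤, htop⟩ := by
    rintro ⟨V, hV⟩
    exact Subtype.ext (Submodule.eq_top_of_finrank_eq (by rw [hV, finrank_euclideanSpace_fin]))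
  have hne : Nonempty {V : Submodule ℝ (EuclideanSpace ℝ (Fin n)) //
      Module.finrank ℝ V = n} := ⟨⟨⊤, htop⟩⟩
  have hval : ∀ V : {V : Submodule ℝ (EuclideanSpace ℝ (Fin n)) // Module.finrank ℝ V = n},
      (⨅ x : {x : EuclideanSpace ℝ (Fin n) // x ∈ V.1 ∧ ‖x‖ = 1},
        ‖Matrix.toEuclideanLin A x.1‖)
      = ⨅ x : {x : EuclideanSpace ℝ (Fin n) //
          x ∈ (⊤ : Submodule ℝ (EuclideanSpace ℝ (Fin n))) ∧ ‖x‖ = 1}, ‖cl A x.1‖ := by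
    intro V
    rw [key V]
    rfl
  rw [singVal]
  apply le_antisymm
  · exact ciSup_le fun V => le_of_eq (hval V)
  · refine le_trans (le_of_eq (hval ⟨⊤, htop⟩).symm) (le_ciSup (f := fun V : {V : Submodule ℝ (EuclideanSpace ℝ (Fin n)) // Module.finrank ℝ V = n} => ⨅ x : {x : EuclideanSpace ℝ (Fin n) // x ∈ V.1 ∧ ‖x‖ = 1}, ‖Matrix.toEuclideanLin A x.1‖) ⟨⨅ x : {x : EuclideanSpace ℝ (Fin n) // x ∈ (⊤ : Submodule ℝ (EuclideanSpace ℝ (Fin n))) ∧ ‖x‖ = 1}, ‖cl A x.1‖, ?_⟩ (⟨⊤, htop⟩ :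
      {V : Submodule ℝ (EuclideanSpace ℝ (Fin n)) // Module.finrank ℝ V = n}))
    rintro _ ⟨V, rfl⟩
    exact le_of_eq (hval V)

lemma exists_norm_eq_opnorm {n m : ℕ} (hn : 0 < n)
    (f : EuclideanSpace ℝ (Fin n) →L[ℝ] EuclideanSpace ℝ (Fin m)) :
    ∃ y : EuclideanSpace ℝ (Fin n), ‖y‖ = 1 ∧ ‖f y‖ = ‖f‖ := by
  have hx0 : ‖(EuclideanSpace.single (⟨0, hn⟩ : Fin n) (1:ℝ) : EuclideanSpace ℝ (Fin n))‖ = 1 := by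
    simp [EuclideanSpace.norm_single]
  have hcs : IsCompact (Metric.sphere (0 : EuclideanSpace ℝ (Fin n)) 1) := isCompact_sphere _ _
  have hnes : (Metric.sphere (0 : EuclideanSpace ℝ (Fin n)) 1).Nonempty :=
    ⟨_, by rw [mem_sphere_zero_iff_norm]; exact hx0⟩
  obtain ⟨y, hy, hmax'⟩ := hcs.exists_isMaxOn hnes
    ((continuous_norm.comp f.continuous).continuousOn)
  have hmax : ∀ z ∈ Metric.sphere (0 : EuclideanSpace ℝ (Fin n)) 1, ‖f z‖ ≤ ‖f y‖ := hmax'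
  rw [mem_sphere_zero_iff_norm] at hy
  refine ⟨y, hy, le_antisymm (by simpa [hy] using f.le_opNorm y) ?_⟩
  refine f.opNorm_le_bound (norm_nonneg _) fun x => ?_
  rcases eq_or_ne x 0 with rfl | hx
  · simp
  · have hxn : ‖x‖ ≠ 0 := norm_ne_zero_iff.mpr hx
    have hu : ‖(‖x‖⁻¹ • x : EuclideanSpace ℝ (Fin n))‖ = 1 := by
      rw [norm_smul, norm_inv, norm_norm, inv_mul_cancel₀ hxn]
    have := hmax (‖x‖⁻¹ • x) (by rw [mem_sphere_zero_iff_norm]; exact hu)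
    rw [_root_.map_smul, norm_smul, norm_inv, norm_norm] at this
    calc ‖f x‖ = ‖x‖ * (‖x‖⁻¹ * ‖f x‖) := by field_simp
      _ ≤ ‖x‖ * ‖f y‖ := by
          exact mul_le_mul_of_nonneg_left this (norm_nonneg x)
      _ = ‖f y‖ * ‖x‖ := mul_comm _ _

lemma inf_symm {n : ℕ} (hn : 0 < n)
    (e : EuclideanSpace ℝ (Fin n) ≃L[ℝ] EuclideanSpace ℝ (Fin n)) :
    (⨅ x : {x : EuclideanSpace ℝ (Fin n) //
      x ∈ (⊤ : Submodule ℝ (EuclideanSpace ℝ (Fin n))) ∧ ‖x‖ = 1}, ‖e.symm x.1‖)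
      = 1 / ‖(e : EuclideanSpace ℝ (Fin n) →L[ℝ] EuclideanSpace ℝ (Fin n))‖ := by
  set f : EuclideanSpace ℝ (Fin n) →L[ℝ] EuclideanSpace ℝ (Fin n) := (e : EuclideanSpace ℝ (Fin n) →L[ℝ] EuclideanSpace ℝ (Fin n)) with hf
  have hx0 : ‖(EuclideanSpace.single (⟨0, hn⟩ : Fin n) (1:ℝ) : EuclideanSpace ℝ (Fin n))‖ = 1 := by
    simp [EuclideanSpace.norm_single]
  have hfne : ‖f‖ ≠ 0 := by
    intro h
    have h0 : f = 0 := by rwa [← ContinuousLinearMap.opNorm_zero_iff]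
    have : (EuclideanSpace.single (⟨0, hn⟩ : Fin n) (1:ℝ) : EuclideanSpace ℝ (Fin n)) = 0 := by
      have := congrArg (fun g : EuclideanSpace ℝ (Fin n) →L[ℝ] EuclideanSpace ℝ (Fin n) =>
        g (EuclideanSpace.single (⟨0, hn⟩ : Fin n) (1:ℝ))) h0
      simp only [ContinuousLinearMap.zero_apply] at this
      exact e.injective (by simpa [hf] using this)
    rw [this] at hx0; simp at hx0
  have hfpos : 0 < ‖f‖ := lt_of_le_of_ne (norm_nonneg f) (Ne.symm hfne)
  apply le_antisymm
  · -- inf ≤ 1/‖f‖, via maximizer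
    obtain ⟨y, hy1, hyE⟩ := exists_norm_eq_opnorm hn f
    have hey : ‖e y‖ = ‖f‖ := hyE
    refine ciInf_le_of_le ⟨0, by rintro _ ⟨z, rfl⟩; positivity⟩
      ⟨‖f‖⁻¹ • e y, Submodule.mem_top, ?_⟩ ?_
    · rw [norm_smul, norm_inv, norm_norm, hey, inv_mul_cancel₀ hfne]
    · show ‖e.symm (‖f‖⁻¹ • e y)‖ ≤ 1 / ‖f‖
      rw [_root_.map_smul, e.symm_apply_apply, norm_smul, norm_inv, norm_norm, hy1, mul_one,
        one_div]
  · have : Nonempty {x : EuclideanSpace ℝ (Fin n) //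
        x ∈ (⊤ : Submodule ℝ (EuclideanSpace ℝ (Fin n))) ∧ ‖x‖ = 1} :=
      ⟨⟨_, Submodule.mem_top, hx0⟩⟩
    refine le_ciInf ?_
    rintro ⟨x, -, hx1⟩
    show 1 / ‖f‖ ≤ ‖e.symm x‖
    rw [div_le_iff₀ hfpos]
    calc (1:ℝ) = ‖x‖ := hx1.symm
      _ = ‖e (e.symm x)‖ := by rw [e.apply_symm_apply]
      _ ≤ ‖f‖ * ‖e.symm x‖ := f.le_opNorm _
      _ = ‖e.symm x‖ * ‖f‖ := mul_comm _ _

lemma cl_transpose_le {m n : ℕ} (A : Matrix (Fin m) (Fin n) ℝ) (p : EuclideanSpace ℝ (Fin m)) :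
    ‖cl Aᵀ p‖ ≤ ‖cl A‖ * ‖p‖ := by
  rcases eq_or_ne (‖cl Aᵀ p‖) 0 with h0 | h0
  · rw [h0]; positivity
  have hpos : 0 < ‖cl Aᵀ p‖ := lt_of_le_of_ne (norm_nonneg _) (Ne.symm h0)
  have key : ‖cl Aᵀ p‖ ^ 2 = inner ℝ (cl A (cl Aᵀ p)) p := by
    rw [norm_sq_cl]
    have h1 : (inner ℝ (cl A (cl Aᵀ p)) p : ℝ) = (A *ᵥ (Aᵀ *ᵥ p)) ⬝ᵥ p := by
      rw [PiLp.inner_apply]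
      simp only [RCLike.inner_apply, conj_trivial]
      rw [dotProduct]; exact Finset.sum_congr rfl fun _ _ => mul_comm _ _
    rw [h1, dotProduct_mulVec (Aᵀ *ᵥ p) Aᵀ p, vecMul_transpose]
  have hcs : (inner ℝ (cl A (cl Aᵀ p)) p : ℝ) ≤ ‖cl A (cl Aᵀ p)‖ * ‖p‖ := real_inner_le_norm _ _
  have h2 : ‖cl A (cl Aᵀ p)‖ ≤ ‖cl A‖ * ‖cl Aᵀ p‖ := (cl A).le_opNorm _
  nlinarith [norm_nonneg p, norm_nonneg (cl Aᵀ p)]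

set_option maxHeartbeats 1000000 in
/-- If `U = Pmat * U_S` with `UᵀU = I_K`, `Pmat` row-stochastic with
`Pmat.submatrix S id = I_K` and `rank Pmat = K`, then the maximum row norm of `U` satisfies
`‖U‖_{2,∞} ≤ ‖U_S‖ = 1/σ_K(Pmat)`, where `‖U_S‖ = σ₁(U_S)` is the operator norm and
`σ_K(Pmat)` the smallest (K-th) singular value of `Pmat`. -/
theorem stmt18 {N K : ℕ}
    (Pmat U : Matrix (Fin N) (Fin K) ℝ)
    (hPnn : ∀ i k, 0 ≤ Pmat i k) (hProw : ∀ i, ∑ k, Pmat i k = 1)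
    (S : Fin K → Fin N) (hS : Pmat.submatrix S id = 1)
    (hrkP : Pmat.rank = K)
    (hUo : Uᵀ * U = 1)
    (hU : U = Pmat * U.submatrix S id) :
    (∀ i, Real.sqrt (∑ k, (U i k) ^ 2) ≤ singVal (U.submatrix S id) 1) ∧
      singVal (U.submatrix S id) 1 = 1 / singVal Pmat K := by
  rcases Nat.eq_zero_or_pos K with hK | hK
  · -- degenerate case K = 0
    subst hK
    have hempty1 : IsEmpty {V : Submodule ℝ (EuclideanSpace ℝ (Fin 0)) //
        Module.finrank ℝ V = 1} := by
      refine ⟨fun V => ?_⟩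
      have h1 : Module.finrank ℝ V.1 ≤ Module.finrank ℝ (EuclideanSpace ℝ (Fin 0)) :=
        Submodule.finrank_le V.1
      rw [finrank_euclideanSpace_fin, V.2] at h1
      omega
    have hsv1 : singVal (U.submatrix S id) 1 = 0 := by
      rw [singVal, iSup, Set.range_eq_empty, Real.sSup_empty]
    have hsv0 : singVal Pmat 0 = 0 := by
      rw [singVal]
      have hc : ∀ V : {V : Submodule ℝ (EuclideanSpace ℝ (Fin 0)) // Module.finrank ℝ V = 0},
          (⨅ x : {x : EuclideanSpace ℝ (Fin 0) // x ∈ V.1 ∧ ‖x‖ = 1},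
            ‖Matrix.toEuclideanLin Pmat x.1‖) = 0 := by
        intro V
        have : IsEmpty {x : EuclideanSpace ℝ (Fin 0) // x ∈ V.1 ∧ ‖x‖ = 1} := by
          refine ⟨fun x => ?_⟩
          have : x.1 = 0 := Subsingleton.elim _ _
          have h1 := x.2.2
          rw [this] at h1
          simp at h1
        rw [iInf, Set.range_eq_empty, Real.sInf_empty]
      have hne : Nonempty {V : Submodule ℝ (EuclideanSpace ℝ (Fin 0)) //
          Module.finrank ℝ V = 0} := ⟨⟨⊥, finrank_bot ℝ _⟩⟩
      calc (⨆ V : {V : Submodule ℝ (EuclideanSpace ℝ (Fin 0)) // Module.finrank ℝ V = 0},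
            ⨅ x : {x : EuclideanSpace ℝ (Fin 0) // x ∈ V.1 ∧ ‖x‖ = 1},
              ‖Matrix.toEuclideanLin Pmat x.1‖)
          = ⨆ _ : {V : Submodule ℝ (EuclideanSpace ℝ (Fin 0)) // Module.finrank ℝ V = 0},
              (0:ℝ) := by exact iSup_congr hc
        _ = 0 := ciSup_const
    refine ⟨fun i => ?_, ?_⟩
    · have hz : ∑ k : Fin 0, (U i k) ^ 2 = 0 := by simp
      rw [hz, Real.sqrt_zero, hsv1]
    · rw [hsv1, hsv0, div_zero]
  · -- main case K ≥ 1
    obtain ⟨M, hM⟩ : ∃ M, M = U.submatrix S id := ⟨_, rfl⟩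
    rw [← hM]
    have hMPM : (Mᵀ * Pmatᵀ * Pmat) * M = 1 := by
      have h1 : (Pmat * M)ᵀ * (Pmat * M) = 1 := by rw [← hM] at hU; rw [← hU]; exact hUo
      rw [transpose_mul] at h1
      rw [Matrix.mul_assoc, Matrix.mul_assoc]
      rw [Matrix.mul_assoc] at h1
      exact h1
    -- injectivity of toEuclideanLin M
    have h0 : ∀ x : EuclideanSpace ℝ (Fin K), Matrix.toEuclideanLin M x = 0 → x = 0 := by
      intro x hx
      have h1 : cl (Mᵀ * Pmatᵀ * Pmat) (cl M x) = cl ((Mᵀ * Pmatᵀ * Pmat) * M) x :=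
        (cl_mul _ _ _).symm
      have h2 : cl M x = 0 := hx
      rw [h2, map_zero] at h1
      rw [hMPM] at h1
      have h3 : ∀ k, x k = 0 := by
        intro k
        have := congrArg (fun v : EuclideanSpace ℝ (Fin K) => v k) h1
        simpa [cl_apply', one_mulVec] using this.symm
      ext k; exact h3 k
    have hinj : Function.Injective (Matrix.toEuclideanLin M) := by
      intro x y hxy
      have := h0 (x - y) (by rw [map_sub, hxy, sub_self])
      exact sub_eq_zero.mp this
    have hbij : Function.Bijective (Matrix.toEuclideanLin M) :=
      ⟨hinj, (LinearMap.injective_iff_surjective).mp hinj⟩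
    set le' : EuclideanSpace ℝ (Fin K) ≃ₗ[ℝ] EuclideanSpace ℝ (Fin K) :=
      LinearEquiv.ofBijective (Matrix.toEuclideanLin M) hbij with hle'
    set e : EuclideanSpace ℝ (Fin K) ≃L[ℝ] EuclideanSpace ℝ (Fin K) :=
      le'.toContinuousLinearEquiv with he
    have hecl : (e : EuclideanSpace ℝ (Fin K) →L[ℝ] EuclideanSpace ℝ (Fin K)) = cl M := by
      ext x
      rfl
    clear_value e le'
    have hclM0 : ‖cl M‖ ≠ 0 := by
      intro h
      have hz : cl M = 0 := by rwa [← ContinuousLinearMap.opNorm_zero_iff]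
      have hx0 := h0 (EuclideanSpace.single (⟨0, hK⟩ : Fin K) (1:ℝ))
        (by show cl M _ = 0; rw [hz]; rfl)
      have := congrArg (fun v : EuclideanSpace ℝ (Fin K) => v ⟨0, hK⟩) hx0
      simp at this
    have hsv1 : singVal M 1 = ‖cl M‖ := sv_one hK M
    have hnorme : ∀ x : EuclideanSpace ℝ (Fin K),
        ‖cl Pmat x‖ = ‖e.symm x‖ := by
      intro x
      have hx : cl M (e.symm x) = x := by
        rw [← hecl]
        exact e.apply_symm_apply x
      calc ‖cl Pmat x‖ = ‖cl Pmat (cl M (e.symm x))‖ := by rw [hx]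
        _ = ‖cl (Pmat * M) (e.symm x)‖ := by rw [cl_mul]
        _ = ‖cl U (e.symm x)‖ := by rw [← hM] at hU; rw [← hU]
        _ = ‖e.symm x‖ := norm_cl_eq U hUo _
    have hsvK : singVal Pmat K = 1 / ‖cl M‖ := by
      have hcongr : (⨅ x : {x : EuclideanSpace ℝ (Fin K) //
            x ∈ (⊤ : Submodule ℝ (EuclideanSpace ℝ (Fin K))) ∧ ‖x‖ = 1}, ‖cl Pmat x.1‖)
          = ⨅ x : {x : EuclideanSpace ℝ (Fin K) //
            x ∈ (⊤ : Submodule ℝ (EuclideanSpace ℝ (Fin K))) ∧ ‖x‖ = 1}, ‖e.symm x.1‖ :=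
        iInf_congr (fun x => hnorme x.1)
      rw [sv_full, hcongr, inf_symm hK e, hecl]
    refine ⟨fun i => ?_, ?_⟩
    · -- row norm bound
      obtain ⟨p, hp⟩ : ∃ p : EuclideanSpace ℝ (Fin K),
          p = (WithLp.equiv 2 (Fin K → ℝ)).symm (fun j => Pmat i j) := ⟨_, rfl⟩
      have hrow : ∀ k, cl Mᵀ p k = U i k := by
        intro k
        have h1 : cl Mᵀ p k = ∑ j, M j k * Pmat i j := by
          rw [cl_apply']
          simp [mulVec, dotProduct, transpose_apply, hp]
        rw [h1, hU, ← hM]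
        rw [mul_apply]
        exact Finset.sum_congr rfl fun j _ => mul_comm _ _
      have hnr : ‖cl Mᵀ p‖ = Real.sqrt (∑ k, (U i k) ^ 2) := by
        rw [EuclideanSpace.norm_eq]
        congr 1
        exact Finset.sum_congr rfl fun k _ => by rw [hrow k, Real.norm_eq_abs, sq_abs]
      have hpnorm : ‖p‖ ≤ 1 := by
        rw [EuclideanSpace.norm_eq]
        have h1 : ∑ j, ‖p j‖ ^ 2 ≤ 1 := by
          have h2 : ∀ j, ‖p j‖ ^ 2 ≤ Pmat i j := by
            intro j
            have hpj : p j = Pmat i j := by rw [hp]; rfl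
            rw [hpj, Real.norm_eq_abs, sq_abs]
            have hle1 : Pmat i j ≤ 1 := by
              rw [← hProw i]
              exact Finset.single_le_sum (fun k _ => hPnn i k) (Finset.mem_univ j)
            nlinarith [hPnn i j]
          calc ∑ j, ‖p j‖ ^ 2 ≤ ∑ j, Pmat i j :=
              Finset.sum_le_sum fun j _ => h2 j
            _ = 1 := hProw i
        calc Real.sqrt (∑ j, ‖p j‖ ^ 2) ≤ Real.sqrt 1 := Real.sqrt_le_sqrt h1
          _ = 1 := Real.sqrt_one
      calc Real.sqrt (∑ k, (U i k) ^ 2) = ‖cl Mᵀ p‖ := hnr.symm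
        _ ≤ ‖cl M‖ * ‖p‖ := cl_transpose_le M p
        _ ≤ ‖cl M‖ * 1 := mul_le_mul_of_nonneg_left hpnorm (norm_nonneg _)
        _ = singVal M 1 := by rw [mul_one, hsv1]
    · rw [hsv1, hsvK, one_div_one_div]
end
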